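/- Every d-graph with odd dimension d has Euler characteristic zero. -/

import Mathlib

attribute [local instance] Classical.propDecidable

noncomputable section

/-- A finite simple graph on a vertex type `V`: a finite vertex set together with a
symmetric, irreflexive adjacency relation supported on the vertex set. -/
structure FSGraph (V : Type) where
  verts : Finset V
  Adj : V → V → Prop
  symm : ∀ {a b}, Adj a b → Adj b a
  loopless : ∀ a, ¬ Adj a a
  supp : ∀ {a b}, Adj a b → a ∈ verts ∧ b ∈ verts

namespace FSGraph

variable {V : Type}

/-- The subgraph induced by the set of vertices satisfying `P`. -/
def induce (G : FSGraph V) (P : V → Prop) : FSGraph V where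
  verts := G.verts.filter P
  Adj a b := G.Adj a b ∧ P a ∧ P b
  symm h := ⟨G.symm h.1, h.2.2, h.2.1⟩
  loopless a h := G.loopless a h.1
  supp h := ⟨Finset.mem_filter.mpr ⟨(G.supp h.1).1, h.2.1⟩,
             Finset.mem_filter.mpr ⟨(G.supp h.1).2, h.2.2⟩⟩

/-- The unit sphere `S(x)`: the subgraph induced by the neighbours of `x`. -/
def sphere (G : FSGraph V) (x : V) : FSGraph V := G.induce (fun y => G.Adj x y)

/-- `G - x`: the subgraph induced by all vertices different from `x`. -/
def remove (G : FSGraph V) (x : V) : FSGraph V := G.induce (fun y => y ≠ x)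

/-- Contractibility (in the sense of Evako/Knill): the one-point graph `K₁` is
contractible, and a graph is contractible if some vertex `x` has both `S(x)` and
`G - x` contractible.  The empty graph is not contractible. -/
inductive Contractible : FSGraph V → Prop
  | single (G : FSGraph V) (x : V) (h : G.verts = {x}) : Contractible G
  | step (G : FSGraph V) (x : V) (hx : x ∈ G.verts)
      (hS : Contractible (G.sphere x)) (hR : Contractible (G.remove x)) :
      Contractible G

/-- `IsSphere d G`: `G` is a `d`-sphere.  The empty graph is the `(-1)`-sphere; for
`d ≥ 0`, a `d`-sphere is a nonempty graph all of whose unit spheres are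
`(d-1)`-spheres (i.e. a `d`-graph) which becomes contractible after removing some
vertex. -/
inductive IsSphere : ℤ → FSGraph V → Prop
  | empty (G : FSGraph V) (h : G.verts = ∅) : IsSphere (-1) G
  | succ (d : ℤ) (G : FSGraph V) (hd : 0 ≤ d) (hne : G.verts.Nonempty)
      (hunit : ∀ x ∈ G.verts, IsSphere (d - 1) (G.sphere x))
      (hpunct : ∃ x ∈ G.verts, Contractible (G.remove x)) :
      IsSphere d G

/-- A `d`-graph: a nonempty graph all of whose unit spheres are `(d-1)`-spheres. -/
def IsDGraph (d : ℤ) (G : FSGraph V) : Prop :=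
  G.verts.Nonempty ∧ ∀ x ∈ G.verts, IsSphere (d - 1) (G.sphere x)

/-- A `d`-ball: a graph of the form `G - x` with `G` a `d`-sphere and `x` a vertex. -/
def IsBall (d : ℤ) (B : FSGraph V) : Prop :=
  ∃ (G : FSGraph V) (x : V), IsSphere d G ∧ x ∈ G.verts ∧ B = G.remove x

/-- `f` is locally injective (a coloring): adjacent vertices get different values. -/
def LocallyInjective (G : FSGraph V) (f : V → ℝ) : Prop :=
  ∀ a b, G.Adj a b → f a ≠ f b

/-- `S_f^-(x)`: the subgraph of `S(x)` induced by `{y ∈ S(x) : f y < f x}`. -/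
def subSphere (G : FSGraph V) (f : V → ℝ) (x : V) : FSGraph V :=
  (G.sphere x).induce (fun y => f y < f x)

/-- `S_f^+(x)`: the subgraph of `S(x)` induced by `{y ∈ S(x) : f y > f x}`. -/
def supSphere (G : FSGraph V) (f : V → ℝ) (x : V) : FSGraph V :=
  (G.sphere x).induce (fun y => f x < f y)

/-- `x` is a critical point of `f` if at least one of `S_f^-(x)`, `S_f^+(x)` is
not contractible. -/
def IsCritical (G : FSGraph V) (f : V → ℝ) (x : V) : Prop :=
  ¬ Contractible (G.subSphere f x) ∨ ¬ Contractible (G.supSphere f x)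

/-- `f` has exactly two critical points on the vertex set of `G`. -/
def ExactlyTwoCriticalPoints (G : FSGraph V) (f : V → ℝ) : Prop :=
  ∃ a b, a ∈ G.verts ∧ b ∈ G.verts ∧ a ≠ b ∧
    G.IsCritical f a ∧ G.IsCritical f b ∧
    ∀ x ∈ G.verts, G.IsCritical f x → x = a ∨ x = b

/-- A simplex of `G`: a nonempty complete subgraph, given by its vertex set. -/
def IsSimplex (G : FSGraph V) (s : Finset V) : Prop :=
  s.Nonempty ∧ s ⊆ G.verts ∧ ∀ a ∈ s, ∀ b ∈ s, a ≠ b → G.Adj a b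

/-- The finite set of simplices (nonempty complete subgraphs) of `G`. -/
def simplices (G : FSGraph V) : Finset (Finset V) :=
  G.verts.powerset.filter (fun s => G.IsSimplex s)

/-- The Barycentric refinement `G'`: vertices are the simplices of `G`, two simplices
being adjacent when one is a proper subset of the other. -/
def barycentric (G : FSGraph V) : FSGraph (Finset V) where
  verts := G.simplices
  Adj s t := G.IsSimplex s ∧ G.IsSimplex t ∧ (s ⊂ t ∨ t ⊂ s)
  symm h := ⟨h.2.1, h.1, h.2.2.symm⟩
  loopless s h := by
    rcases h.2.2 with h' | h' <;> exact ssubset_irrefl s h'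
  supp {s t} h :=
    ⟨Finset.mem_filter.mpr ⟨Finset.mem_powerset.mpr h.1.2.1, h.1⟩,
     Finset.mem_filter.mpr ⟨Finset.mem_powerset.mpr h.2.1.2.1, h.2.1⟩⟩

/-- The level surface `{f = c}` in the Barycentric refinement `G'`: the subgraph of
`G'` induced by the simplices on which `f - c` takes both positive and negative
values. -/
def levelSurface (G : FSGraph V) (f : V → ℝ) (c : ℝ) : FSGraph (Finset V) :=
  G.barycentric.induce (fun s => (∃ a ∈ s, f a < c) ∧ (∃ b ∈ s, c < f b))

/-- `{f ≤ c}` in `G'`: the subgraph of `G'` induced by the simplices on which `f < c`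
everywhere, together with those on which `f - c` takes both signs. -/
def subLevel (G : FSGraph V) (f : V → ℝ) (c : ℝ) : FSGraph (Finset V) :=
  G.barycentric.induce
    (fun s => (∀ a ∈ s, f a < c) ∨ ((∃ a ∈ s, f a < c) ∧ (∃ b ∈ s, c < f b)))

/-- `{f ≥ c}` in `G'`: the subgraph of `G'` induced by the simplices on which `f > c`
everywhere, together with those on which `f - c` takes both signs. -/
def supLevel (G : FSGraph V) (f : V → ℝ) (c : ℝ) : FSGraph (Finset V) :=
  G.barycentric.induce
    (fun s => (∀ a ∈ s, c < f a) ∨ ((∃ a ∈ s, f a < c) ∧ (∃ b ∈ s, c < f b)))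

/-- The center manifold `B_f(x) = {f = f x}` inside the Barycentric refinement
`S(x)'` of the unit sphere `S(x)`. -/
def centerManifold (G : FSGraph V) (f : V → ℝ) (x : V) : FSGraph (Finset V) :=
  (G.sphere x).levelSurface f (f x)

/-- Euler characteristic: `χ(G) = Σ_k (-1)^k c_k(G)` where `c_k(G)` counts the
complete subgraphs with `k+1` vertices; equivalently the sum of `(-1)^(|s|-1)` over
all simplices `s`. -/
def euler (G : FSGraph V) : ℤ :=
  ∑ s ∈ G.simplices, (-1 : ℤ) ^ (s.card - 1)

/- ============ auxiliary development ============ -/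

lemma ext' {G H : FSGraph V} (hv : G.verts = H.verts)
    (ha : ∀ a b, G.Adj a b ↔ H.Adj a b) : G = H := by
  obtain ⟨v, A, _, _, _⟩ := G
  obtain ⟨w, B, _, _, _⟩ := H
  have hA : A = B := funext fun a => funext fun b => propext (ha a b)
  simp only at hv
  subst hA; subst hv
  rfl

lemma mem_simplices {G : FSGraph V} {s : Finset V} :
    s ∈ G.simplices ↔ G.IsSimplex s := by
  simp only [simplices, Finset.mem_filter, Finset.mem_powerset]
  exact ⟨fun h => h.2, fun h => ⟨h.2.1, h⟩⟩

lemma isSimplex_subset {G : FSGraph V} {s t : Finset V} (ht : G.IsSimplex t)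
    (hs : s ⊆ t) (hne : s.Nonempty) : G.IsSimplex s :=
  ⟨hne, hs.trans ht.2.1, fun a ha b hb hab => ht.2.2 a (hs ha) b (hs hb) hab⟩

/-- The link of a simplex: common neighbours of all its vertices. -/
def link (G : FSGraph V) (s : Finset V) : FSGraph V :=
  G.induce (fun y => ∀ a ∈ s, G.Adj a y)

lemma mem_link_verts {G : FSGraph V} {s : Finset V} {y : V} :
    y ∈ (G.link s).verts ↔ y ∈ G.verts ∧ ∀ a ∈ s, G.Adj a y := by
  simp [link, induce]

lemma not_mem_of_mem_link {G : FSGraph V} {s : Finset V} {y : V}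
    (hy : y ∈ (G.link s).verts) : y ∉ s := fun hys =>
  G.loopless y ((mem_link_verts.mp hy).2 y hys)

lemma link_singleton (G : FSGraph V) (x : V) : G.link {x} = G.sphere x := by
  apply ext'
  · ext y; simp [link, sphere, induce]
  · intro a b; simp [link, sphere, induce]

lemma link_insert (G : FSGraph V) {x : V} {s : Finset V} (hxs : x ∉ s)
    (hadj : ∀ a ∈ s, G.Adj x a) :
    G.link (insert x s) = (G.sphere x).link s := by
  apply ext'
  · ext y
    rw [mem_link_verts, mem_link_verts]
    simp only [sphere, induce, Finset.mem_filter, Finset.mem_insert]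
    constructor
    · rintro ⟨hyv, hall⟩
      refine ⟨⟨hyv, hall x (Or.inl rfl)⟩, fun a ha => ⟨hall a (Or.inr ha), hadj a ha, hall x (Or.inl rfl)⟩⟩
    · rintro ⟨⟨hyv, hxy⟩, hall⟩
      refine ⟨hyv, fun a ha => ?_⟩
      rcases ha with rfl | ha
      · exact hxy
      · exact (hall a ha).1
  · intro a b
    simp only [link, sphere, induce, Finset.mem_insert]
    constructor
    · rintro ⟨hab, ha, hb⟩
      exact ⟨⟨hab, ha x (Or.inl rfl), hb x (Or.inl rfl)⟩,
        fun c hc => ⟨ha c (Or.inr hc), hadj c hc, ha x (Or.inl rfl)⟩,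
        fun c hc => ⟨hb c (Or.inr hc), hadj c hc, hb x (Or.inl rfl)⟩⟩
    · rintro ⟨⟨hab, hxa, hxb⟩, ha, hb⟩
      refine ⟨hab, fun c hc => ?_, fun c hc => ?_⟩
      · rcases hc with rfl | hc
        · exact hxa
        · exact (ha c hc).1
      · rcases hc with rfl | hc
        · exact hxb
        · exact (hb c hc).1

/-- Key bijection sum: sum over simplices containing `s`. -/
lemma sum_filter_superset (G : FSGraph V) {s : Finset V} (hs : G.IsSimplex s) :
    ∑ t ∈ G.simplices.filter (fun t => s ⊆ t), (-1:ℤ) ^ (t.card - 1)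
      = (-1:ℤ) ^ (s.card - 1) * (1 - (G.link s).euler) := by
  classical
  have hdisj : ∀ u ∈ (G.link s).simplices, Disjoint s u := by
    intro u hu
    rw [Finset.disjoint_right]
    intro y hy
    exact not_mem_of_mem_link ((mem_simplices.mp hu).2.1 hy)
  have h1 : ∑ t ∈ G.simplices.filter (fun t => s ⊆ t), (-1:ℤ) ^ (t.card - 1)
      = ∑ u ∈ insert (∅ : Finset V) (G.link s).simplices,
          (-1:ℤ) ^ (s.card + u.card - 1) := by
    refine Finset.sum_nbij' (fun t => t \ s) (fun u => s ∪ u) ?_ ?_ ?_ ?_ ?_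
    · intro t ht
      rw [Finset.mem_filter] at ht
      obtain ⟨hts, hst⟩ := ht
      have htS := mem_simplices.mp hts
      by_cases hts' : t \ s = ∅
      · simp [hts']
      · rw [Finset.mem_insert]
        right
        rw [mem_simplices]
        refine ⟨Finset.nonempty_of_ne_empty hts', ?_, ?_⟩
        · intro y hy
          rw [Finset.mem_sdiff] at hy
          rw [mem_link_verts]
          refine ⟨htS.2.1 hy.1, fun a ha => htS.2.2 a (hst ha) y hy.1 ?_⟩
          rintro rfl; exact hy.2 ha
        · intro a ha b hb hab
          rw [Finset.mem_sdiff] at ha hb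
          refine ⟨htS.2.2 a ha.1 b hb.1 hab, ?_, ?_⟩
          · intro c hc
            exact htS.2.2 c (hst hc) a ha.1 (fun h => ha.2 (h ▸ hc))
          · intro c hc
            exact htS.2.2 c (hst hc) b hb.1 (fun h => hb.2 (h ▸ hc))
    · intro u hu
      rw [Finset.mem_insert] at hu
      rw [Finset.mem_filter]
      rcases hu with rfl | hu
      · simpa [mem_simplices] using hs
      · have huS := mem_simplices.mp hu
        constructor
        · rw [mem_simplices]
          refine ⟨hs.1.mono Finset.subset_union_left, ?_, ?_⟩
          · intro y hy
            rcases Finset.mem_union.mp hy with hy | hy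
            · exact hs.2.1 hy
            · exact (mem_link_verts.mp (huS.2.1 hy)).1
          · intro a ha b hb hab
            rcases Finset.mem_union.mp ha with ha | ha <;>
              rcases Finset.mem_union.mp hb with hb | hb
            · exact hs.2.2 a ha b hb hab
            · exact (mem_link_verts.mp (huS.2.1 hb)).2 a ha
            · exact G.symm ((mem_link_verts.mp (huS.2.1 ha)).2 b hb)
            · exact (huS.2.2 a ha b hb hab).1
        · exact Finset.subset_union_left
    · intro t ht
      rw [Finset.mem_filter] at ht
      exact Finset.union_sdiff_of_subset ht.2
    · intro u hu
      rw [Finset.mem_insert] at hu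
      rcases hu with rfl | hu
      · simp [Finset.union_sdiff_cancel_left]
      · exact Finset.union_sdiff_cancel_left (hdisj u hu)
    · intro t ht
      rw [Finset.mem_filter] at ht
      congr 2
      rw [Finset.card_sdiff_of_subset ht.2]
      have := Finset.card_le_card ht.2
      omega
  rw [h1]
  have h0 : (∅ : Finset V) ∉ (G.link s).simplices := by
    intro h
    exact (mem_simplices.mp h).1.ne_empty rfl
  rw [Finset.sum_insert h0]
  have hm : 1 ≤ s.card := Finset.card_pos.mpr hs.1
  have h2 : ∑ u ∈ (G.link s).simplices, (-1:ℤ) ^ (s.card + u.card - 1)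
      = (-1:ℤ)^s.card * (G.link s).euler := by
    rw [euler, Finset.mul_sum]
    apply Finset.sum_congr rfl
    intro u hu
    have hu1 : 1 ≤ u.card := Finset.card_pos.mpr (mem_simplices.mp hu).1
    rw [← pow_add]
    congr 1
    omega
  rw [h2, Finset.card_empty, Nat.add_zero]
  have h3 : (-1:ℤ)^s.card = -(-1:ℤ)^(s.card - 1) := by
    have : s.card = (s.card - 1) + 1 := by omega
    conv_lhs => rw [this]
    rw [pow_succ]; ring
  rw [h3]
  ring


lemma simplices_remove (G : FSGraph V) (x : V) :
    (G.remove x).simplices = G.simplices.filter (fun s => x ∉ s) := by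
  ext s
  simp only [mem_simplices, Finset.mem_filter, mem_simplices, IsSimplex, remove, induce,
    Finset.subset_iff, Finset.mem_filter]
  constructor
  · rintro ⟨hne, hsub, hadj⟩
    obtain ⟨y, hy⟩ := hne
    refine ⟨⟨⟨y, hy⟩, fun {a} ha => (hsub ha).1, fun a ha b hb hab => (hadj a ha b hb hab).1⟩, ?_⟩
    intro hxs
    exact (hsub hxs).2 rfl
  · rintro ⟨⟨hne, hsub, hadj⟩, hxs⟩
    refine ⟨hne, fun {a} ha => ⟨hsub ha, fun h => hxs (h ▸ ha)⟩,
      fun a ha b hb hab => ⟨hadj a ha b hb hab, fun h => hxs (h ▸ ha), fun h => hxs (h ▸ hb)⟩⟩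

lemma euler_eq_remove_add (G : FSGraph V) {x : V} (hx : x ∈ G.verts) :
    G.euler = (G.remove x).euler + (1 - (G.sphere x).euler) := by
  have hsx : G.IsSimplex {x} := ⟨Finset.singleton_nonempty x,
    Finset.singleton_subset_iff.mpr hx, by simp⟩
  have key := G.sum_filter_superset hsx
  rw [Finset.card_singleton] at key
  norm_num at key
  have hsplit := Finset.sum_filter_add_sum_filter_not G.simplices
    (fun t => ({x} : Finset V) ⊆ t) (fun t => (-1:ℤ) ^ (t.card - 1))
  have hrem : ∑ t ∈ G.simplices.filter (fun t => ¬ ({x} : Finset V) ⊆ t), (-1:ℤ) ^ (t.card - 1)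
      = (G.remove x).euler := by
    rw [euler, simplices_remove]
    apply Finset.sum_congr _ (fun _ _ => rfl)
    apply Finset.filter_congr
    intro t _
    simp [Finset.singleton_subset_iff]
  simp only [Finset.singleton_subset_iff] at hsplit hrem
  rw [euler, ← hsplit, key, hrem, G.link_singleton x]
  ring

lemma euler_of_contractible {G : FSGraph V} (h : Contractible G) : G.euler = 1 := by
  induction h with
  | single G x h =>
    have : G.simplices = {({x} : Finset V)} := by
      ext s
      simp only [mem_simplices, Finset.mem_singleton, IsSimplex, h]
      constructor
      · rintro ⟨hne, hsub, _⟩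
        exact Finset.Nonempty.subset_singleton_iff hne |>.mp hsub
      · rintro rfl
        exact ⟨Finset.singleton_nonempty x, Finset.Subset.refl _, by simp⟩
    rw [euler, this]
    simp
  | step G x hx hS hR ihS ihR =>
    rw [euler_eq_remove_add G hx, ihS, ihR]
    ring

lemma euler_of_isSphere {d : ℤ} {G : FSGraph V} (h : IsSphere d G) :
    G.euler = if Even d then 2 else 0 := by
  induction h with
  | empty G h =>
    have : G.simplices = ∅ := by
      ext s
      simp only [mem_simplices, Finset.notMem_empty, iff_false, IsSimplex, h, not_and]
      intro hne hsub
      exact absurd (Finset.subset_empty.mp hsub) hne.ne_empty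
    rw [euler, this]
    simp [Int.even_iff]
  | succ d G hd hne hunit hpunct ih =>
    obtain ⟨x, hx, hc⟩ := hpunct
    rw [euler_eq_remove_add G hx, euler_of_contractible hc, ih x hx]
    have : Even d ↔ ¬ Even (d - 1) := by
      simp [Int.even_sub_one]
    by_cases he : Even d
    · rw [if_pos he, if_neg (this.mp he)]; ring
    · rw [if_neg he, if_pos (not_not.mp (mt this.mpr he))]; ring

lemma unit_spheres_of_isSphere {e : ℤ} {H : FSGraph V} (h : IsSphere e H)
    (hne : H.verts.Nonempty) : ∀ y ∈ H.verts, IsSphere (e - 1) (H.sphere y) := by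
  cases h with
  | empty _ h => exact absurd h hne.ne_empty
  | succ _ _ _ _ hunit _ => exact hunit

lemma isSphere_link : ∀ (m : ℕ) (G : FSGraph V) (d : ℤ) (s : Finset V),
    (∀ x ∈ G.verts, IsSphere (d - 1) (G.sphere x)) → G.IsSimplex s →
    s.card = m + 1 → IsSphere (d - (m + 1)) (G.link s) := by
  intro m
  induction m with
  | zero =>
    intro G d s hunit hs hcard
    obtain ⟨x, rfl⟩ := Finset.card_eq_one.mp hcard
    rw [G.link_singleton x]
    have : d - ((0:ℕ) + 1) = d - 1 := by push_cast; ring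
    rw [this]
    exact hunit x (hs.2.1 (Finset.mem_singleton_self x))
  | succ m ih =>
    intro G d s hunit hs hcard
    obtain ⟨x, hx⟩ := hs.1
    set s' := s.erase x with hs'
    have hxs' : x ∉ s' := Finset.notMem_erase x s
    have hins : insert x s' = s := Finset.insert_erase hx
    have hcard' : s'.card = m + 1 := by
      rw [hs', Finset.card_erase_of_mem hx, hcard]; omega
    have hadj : ∀ a ∈ s', G.Adj x a := by
      intro a ha
      exact hs.2.2 x hx a (Finset.mem_of_mem_erase ha) (Finset.ne_of_mem_erase ha).symm
    have hxv : x ∈ G.verts := hs.2.1 hx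
    have hsphere := hunit x hxv
    have hs'sub : ∀ a ∈ s', a ∈ (G.sphere x).verts := by
      intro a ha
      simp only [sphere, induce, Finset.mem_filter]
      exact ⟨hs.2.1 (Finset.mem_of_mem_erase ha), hadj a ha⟩
    have hs'ne : s'.Nonempty := Finset.card_pos.mp (by omega)
    have hne : (G.sphere x).verts.Nonempty := ⟨hs'ne.choose, hs'sub _ hs'ne.choose_spec⟩
    have hsimp' : (G.sphere x).IsSimplex s' := by
      refine ⟨hs'ne, fun a ha => hs'sub a ha, fun a ha b hb hab => ?_⟩
      exact ⟨hs.2.2 a (Finset.mem_of_mem_erase ha) b (Finset.mem_of_mem_erase hb) hab,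
        hadj a ha, hadj b hb⟩
    have hunit' := unit_spheres_of_isSphere hsphere hne
    have := ih (G.sphere x) (d - 1) s' hunit' hsimp' hcard'
    rw [← hins, G.link_insert hxs' hadj]
    have heq : d - 1 - ((m:ℤ) + 1) = d - (((m+1:ℕ):ℤ) + 1) := by push_cast; ring
    rw [← heq]
    exact this

lemma sum_superset_eq_neg_one {d : ℤ} (hd : Odd d) {G : FSGraph V}
    (hunit : ∀ x ∈ G.verts, IsSphere (d - 1) (G.sphere x)) {s : Finset V}
    (hs : G.IsSimplex s) :
    ∑ t ∈ G.simplices.filter (fun t => s ⊆ t), (-1:ℤ) ^ (t.card - 1) = -1 := by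
  rw [G.sum_filter_superset hs]
  have hm : 1 ≤ s.card := Finset.card_pos.mpr hs.1
  have hlink := isSphere_link (s.card - 1) G d s hunit hs (by omega)
  rw [euler_of_isSphere hlink]
  set k := s.card - 1 with hk
  have h1 : Even (d - (((k:ℕ):ℤ) + 1)) ↔ Even k := by
    obtain ⟨j, hj⟩ := hd
    subst hj
    rw [show 2 * j + 1 - (((k:ℕ):ℤ) + 1) = 2 * j - k by ring, Int.even_sub]
    simp [Int.even_coe_nat, parity_simps]
  by_cases hke : Even k
  · rw [if_pos (h1.mpr hke), Even.neg_one_pow hke]; ring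
  · rw [if_neg (fun h => hke (h1.mp h)),
      Odd.neg_one_pow (Nat.not_even_iff_odd.mp hke)]; ring

lemma euler_eq_zero_of_odd {d : ℤ} (hd : Odd d) {G : FSGraph V}
    (hunit : ∀ x ∈ G.verts, IsSphere (d - 1) (G.sphere x)) : G.euler = 0 := by
  classical
  have inner : ∀ t ∈ G.simplices,
      ∑ z ∈ G.simplices.filter (fun z => z ⊆ t), (-1:ℤ) ^ (z.card - 1) = 1 := by
    intro t ht
    have htS := mem_simplices.mp ht
    have hset : G.simplices.filter (fun z => z ⊆ t) = t.powerset.erase ∅ := by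
      ext z
      simp only [Finset.mem_filter, Finset.mem_erase, Finset.mem_powerset, mem_simplices]
      constructor
      · rintro ⟨hzS, hzt⟩
        exact ⟨hzS.1.ne_empty, hzt⟩
      · rintro ⟨hne', hzt⟩
        exact ⟨isSimplex_subset htS hzt (Finset.nonempty_of_ne_empty hne'), hzt⟩
    rw [hset]
    have hterm : ∀ z ∈ t.powerset.erase ∅, (-1:ℤ) ^ (z.card - 1) = -((-1:ℤ) ^ z.card) := by
      intro z hz
      have hz1 : 1 ≤ z.card := Finset.card_pos.mpr
        (Finset.nonempty_of_ne_empty (Finset.mem_erase.mp hz).1)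
      have h2 : z.card = (z.card - 1) + 1 := by omega
      conv_rhs => rw [h2]
      rw [pow_succ]; ring
    rw [show (∑ z ∈ t.powerset.erase ∅, (-1:ℤ) ^ (z.card - 1))
        = ∑ z ∈ t.powerset.erase ∅, -((-1:ℤ) ^ z.card) from Finset.sum_congr rfl hterm]
    have hadd : (∑ z ∈ t.powerset.erase ∅, (-1:ℤ) ^ z.card) + (-1:ℤ) ^ (∅ : Finset V).card
        = ∑ z ∈ t.powerset, (-1:ℤ) ^ z.card :=
      Finset.sum_erase_add _ _ (Finset.mem_powerset.mpr (Finset.empty_subset t))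
    have hps : ∑ z ∈ t.powerset, (-1:ℤ) ^ z.card = 0 := by
      rw [Finset.sum_powerset_neg_one_pow_card, if_neg htS.1.ne_empty]
    rw [Finset.sum_neg_distrib]
    have hval : ∑ z ∈ t.powerset.erase ∅, (-1:ℤ) ^ z.card = -1 := by
      have h := hadd
      rw [hps, Finset.card_empty, pow_zero] at h
      linarith
    rw [hval]; ring
  have key : ∀ z ∈ G.simplices,
      ∑ t ∈ G.simplices.filter (fun t => z ⊆ t), (-1:ℤ) ^ (t.card - 1) = -1 :=
    fun z hz => sum_superset_eq_neg_one hd hunit (mem_simplices.mp hz)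
  have main : G.euler = - G.euler := by
    calc G.euler
        = ∑ t ∈ G.simplices,
            (∑ z ∈ G.simplices.filter (fun z => z ⊆ t), (-1:ℤ) ^ (z.card - 1))
              * (-1:ℤ) ^ (t.card - 1) := by
          rw [euler]
          exact Finset.sum_congr rfl fun t ht => by rw [inner t ht, one_mul]
      _ = ∑ t ∈ G.simplices, ∑ z ∈ G.simplices,
            (if z ⊆ t then (-1:ℤ) ^ (z.card - 1) * (-1:ℤ) ^ (t.card - 1) else 0) := by
          refine Finset.sum_congr rfl fun t ht => ?_
          rw [Finset.sum_mul, Finset.sum_filter]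
      _ = ∑ z ∈ G.simplices, ∑ t ∈ G.simplices,
            (if z ⊆ t then (-1:ℤ) ^ (z.card - 1) * (-1:ℤ) ^ (t.card - 1) else 0) :=
          Finset.sum_comm
      _ = ∑ z ∈ G.simplices, -(-1:ℤ) ^ (z.card - 1) := by
          refine Finset.sum_congr rfl fun z hz => ?_
          rw [← Finset.sum_filter, ← Finset.mul_sum, key z hz]
          ring
      _ = - G.euler := by rw [euler, Finset.sum_neg_distrib]
  linarith

end FSGraph

/-- Every `d`-graph with odd `d` has Euler characteristic zero. -/
theorem euler_characteristic_of_odd_dgraph {V : Type} (d : ℤ) (hd : Odd d)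
    (G : FSGraph V) (hG : FSGraph.IsDGraph d G) :
    G.euler = 0 :=
  FSGraph.euler_eq_zero_of_odd hd hG.2
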